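/- Let N ≥ 2, λ₀ > (N−1)²/4, and for ε ≥ 0 set u_ε(ρ) = (sinh(ρ/2))^{−(N−1+ε)} and f(ρ,ε) = −u_ε''(ρ) − (N−1) coth(ρ) u_ε'(ρ) − λ u_ε(ρ). Then there exist ε₀ > 0 and R > 0 such that f(ρ, ε) < 0 for all λ ≥ λ₀, all ρ ≥ R and all 0 ≤ ε < ε₀. -/

import Mathlib

/-- The `ε`-perturbed radial function `u_ε(ρ) = (sinh(ρ/2))^{-(N-1+ε)}`. -/
noncomputable def uEps (N : ℕ) (ε ρ : ℝ) : ℝ :=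
  Real.sinh (ρ / 2) ^ (-((N : ℝ) - 1 + ε))

/-- `f(ρ,ε) = -u_ε'' - (N-1) coth ρ · u_ε' - λ u_ε`. -/
noncomputable def fEps (N : ℕ) (lam ε ρ : ℝ) : ℝ :=
  -(deriv (deriv (uEps N ε)) ρ)
    - ((N : ℝ) - 1) * (Real.cosh ρ / Real.sinh ρ) * deriv (uEps N ε) ρ
    - lam * uEps N ε ρ

/-- First-derivative candidate. -/
noncomputable def vAux (N : ℕ) (ε ρ : ℝ) : ℝ :=
  (-((N : ℝ) - 1 + ε)) * Real.sinh (ρ / 2) ^ (-((N : ℝ) - 1 + ε) - 1)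
    * (Real.cosh (ρ / 2) * (1 / 2))

lemma hasDerivAt_sinh_half (ρ : ℝ) :
    HasDerivAt (fun x : ℝ => Real.sinh (x / 2)) (Real.cosh (ρ / 2) * (1 / 2)) ρ := by
  simpa [Function.comp_def] using (Real.hasDerivAt_sinh (ρ / 2)).comp ρ ((hasDerivAt_id ρ).div_const 2)

lemma hasDerivAt_cosh_half (ρ : ℝ) :
    HasDerivAt (fun x : ℝ => Real.cosh (x / 2)) (Real.sinh (ρ / 2) * (1 / 2)) ρ := by
  simpa [Function.comp_def] using (Real.hasDerivAt_cosh (ρ / 2)).comp ρ ((hasDerivAt_id ρ).div_const 2)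

lemma hasDerivAt_uEps (N : ℕ) (ε : ℝ) {ρ : ℝ} (h : 0 < ρ) :
    HasDerivAt (uEps N ε) (vAux N ε ρ) ρ := by
  have hs : (0:ℝ) < Real.sinh (ρ / 2) := Real.sinh_pos_iff.2 (by linarith)
  have key := (hasDerivAt_sinh_half ρ).rpow_const (p := -((N : ℝ) - 1 + ε)) (Or.inl hs.ne')
  unfold uEps vAux
  convert key using 1
  ring

lemma deriv_uEps (N : ℕ) (ε : ℝ) {ρ : ℝ} (h : 0 < ρ) :
    deriv (uEps N ε) ρ = vAux N ε ρ := (hasDerivAt_uEps N ε h).deriv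

lemma hasDerivAt_vAux (N : ℕ) (ε : ℝ) {ρ : ℝ} (h : 0 < ρ) :
    HasDerivAt (vAux N ε)
      ((-((N : ℝ) - 1 + ε)) * ((-((N : ℝ) - 1 + ε) - 1)
          * Real.sinh (ρ / 2) ^ (-((N : ℝ) - 1 + ε) - 1 - 1) * (Real.cosh (ρ / 2) * (1 / 2)))
        * (Real.cosh (ρ / 2) * (1 / 2))
      + (-((N : ℝ) - 1 + ε)) * Real.sinh (ρ / 2) ^ (-((N : ℝ) - 1 + ε) - 1)
        * (Real.sinh (ρ / 2) * (1 / 2) * (1 / 2))) ρ := by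
  have hs : (0:ℝ) < Real.sinh (ρ / 2) := Real.sinh_pos_iff.2 (by linarith)
  have hg := ((hasDerivAt_sinh_half ρ).rpow_const
      (p := -((N : ℝ) - 1 + ε) - 1) (Or.inl hs.ne')).const_mul (-((N : ℝ) - 1 + ε))
  have hh := (hasDerivAt_cosh_half ρ).mul_const (1 / 2 : ℝ)
  have key := hg.mul hh
  unfold vAux
  exact key.congr_deriv (by ring)

lemma deriv_deriv_uEps (N : ℕ) (ε : ℝ) {ρ : ℝ} (h : 0 < ρ) :
    deriv (deriv (uEps N ε)) ρ
      = (-((N : ℝ) - 1 + ε)) * ((-((N : ℝ) - 1 + ε) - 1)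
          * Real.sinh (ρ / 2) ^ (-((N : ℝ) - 1 + ε) - 1 - 1) * (Real.cosh (ρ / 2) * (1 / 2)))
        * (Real.cosh (ρ / 2) * (1 / 2))
      + (-((N : ℝ) - 1 + ε)) * Real.sinh (ρ / 2) ^ (-((N : ℝ) - 1 + ε) - 1)
        * (Real.sinh (ρ / 2) * (1 / 2) * (1 / 2)) := by
  have heq : deriv (uEps N ε) =ᶠ[nhds ρ] vAux N ε := by
    filter_upwards [isOpen_Ioi.mem_nhds h] with x hx
    exact deriv_uEps N ε hx
  rw [heq.deriv_eq]
  exact (hasDerivAt_vAux N ε h).deriv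

lemma fEps_eq (N : ℕ) (lam ε : ℝ) {ρ : ℝ} (h : 0 < ρ) :
    fEps N lam ε ρ = Real.sinh (ρ / 2) ^ (-((N : ℝ) - 1 + ε) - 2) *
      (((((N : ℝ) - 1) ^ 2 - ε ^ 2) / 4 - lam) * Real.sinh (ρ / 2) ^ 2
        - ((N : ℝ) - 1 + ε) * (1 + ε) / 4) := by
  have hs : (0:ℝ) < Real.sinh (ρ / 2) := Real.sinh_pos_iff.2 (by linarith)
  have hc : (0:ℝ) < Real.cosh (ρ / 2) := Real.cosh_pos _
  set α : ℝ := (N : ℝ) - 1 + ε with hα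
  have h1 : Real.sinh (ρ / 2) ^ (-α - 1)
      = Real.sinh (ρ / 2) ^ (-α - 2) * Real.sinh (ρ / 2) := by
    rw [show (-α - 1 : ℝ) = (-α - 2) + 1 by ring, Real.rpow_add hs, Real.rpow_one]
  have h0 : Real.sinh (ρ / 2) ^ (-α)
      = Real.sinh (ρ / 2) ^ (-α - 2) * Real.sinh (ρ / 2) ^ 2 := by
    rw [show (-α : ℝ) = (-α - 2) + 2 by ring, Real.rpow_add hs]
    norm_num [Real.rpow_natCast]
  have hcosh : Real.cosh ρ = 2 * Real.sinh (ρ / 2) ^ 2 + 1 := by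
    rw [show ρ = 2 * (ρ / 2) by ring, Real.cosh_two_mul, Real.cosh_sq]; ring
  have hsinh : Real.sinh ρ = 2 * Real.sinh (ρ / 2) * Real.cosh (ρ / 2) := by
    rw [show ρ = 2 * (ρ / 2) by ring, Real.sinh_two_mul]; ring
  have hc2 : Real.cosh (ρ / 2) ^ 2 = Real.sinh (ρ / 2) ^ 2 + 1 := Real.cosh_sq _
  rw [fEps, deriv_deriv_uEps N ε h, deriv_uEps N ε h]
  unfold uEps vAux
  rw [← hα, show (-α - 1 - 1 : ℝ) = -α - 2 by ring, h1, h0, hcosh, hsinh]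
  set P := Real.sinh (ρ / 2) ^ (-α - 2) with hP
  set s := Real.sinh (ρ / 2)
  set c := Real.cosh (ρ / 2)
  field_simp
  linear_combination (4 * α * (-α - 1) * P) * hc2

theorem fEps_neg_of_lam_large (N : ℕ) (hN : 2 ≤ N) (lam₀ : ℝ)
    (hlam₀ : ((N : ℝ) - 1) ^ 2 / 4 < lam₀) :
    ∃ ε₀ > (0:ℝ), ∃ R > (0:ℝ), ∀ lam ≥ lam₀, ∀ ρ ≥ R, ∀ ε : ℝ, 0 ≤ ε → ε < ε₀ →
      fEps N lam ε ρ < 0 := by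
  refine ⟨1, one_pos, 1, one_pos, fun lam hlam ρ hρ ε hε0 hε1 => ?_⟩
  have hρ0 : (0:ℝ) < ρ := lt_of_lt_of_le one_pos hρ
  have hs : (0:ℝ) < Real.sinh (ρ / 2) := Real.sinh_pos_iff.2 (by linarith)
  have hN1 : (1:ℝ) ≤ (N : ℝ) - 1 := by
    have : (2:ℝ) ≤ (N : ℝ) := by exact_mod_cast hN
    linarith
  rw [fEps_eq N lam ε hρ0]
  apply mul_neg_of_pos_of_neg (Real.rpow_pos_of_pos hs _)
  have hA : (((N : ℝ) - 1) ^ 2 - ε ^ 2) / 4 - lam < 0 := by nlinarith [sq_nonneg ε]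
  have hB : (0:ℝ) < ((N : ℝ) - 1 + ε) * (1 + ε) / 4 := by nlinarith
  nlinarith [mul_pos hs hs, mul_neg_of_neg_of_pos hA (mul_pos hs hs)]
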